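/- Let X and Y be binary random variables with P(X=0)=α and P(Y=0)=β, where 0 < β < α < 1/2. Then for any joint distribution of (X,Y) consistent with these marginals, I(X;Y) ≤ h_b(β) − α·h_b(β/α), and this bound is achieved. -/

import Mathlib

open Real

/-- Binary entropy (natural log). -/
noncomputable def binEnt (p : ℝ) : ℝ := -(p * Real.log p) - (1 - p) * Real.log (1 - p)

/-- Mutual information of a joint distribution `p` on `{0,1} × {0,1}`. -/
noncomputable def mutInfo2 (p : Fin 2 → Fin 2 → ℝ) : ℝ :=
  ∑ i : Fin 2, ∑ j : Fin 2,
    p i j * Real.log (p i j / ((p i 0 + p i 1) * (p 0 j + p 1 j)))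

/-- A joint distribution on `{0,1}×{0,1}` with marginals `P(X=0)=α`, `P(Y=0)=β`. -/
def JointWithMarginals (p : Fin 2 → Fin 2 → ℝ) (α β : ℝ) : Prop :=
  (∀ i j, 0 ≤ p i j) ∧ (∑ i : Fin 2, ∑ j : Fin 2, p i j = 1) ∧
    (p 0 0 + p 0 1 = α) ∧ (p 0 0 + p 1 0 = β)

lemma pairIneq (a b c d : ℝ) (hc : 0 ≤ c) (hca : c ≤ a) (hcb : c ≤ b)
    (hsum : a + b = c + d) :
    a * log a + b * log b ≤ c * log c + d * log d := by
  rcases eq_or_lt_of_le (show c ≤ d by linarith) with h | hcd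
  · have ha : a = c := by linarith
    have hb : b = c := by linarith
    rw [ha, hb, h]
  · have hdc : (0:ℝ) < d - c := by linarith
    set f : ℝ → ℝ := fun x => x * log x with hf
    have hconv := Real.convexOn_mul_log
    have hdmem : d ∈ Set.Ici (0:ℝ) := by simp; linarith
    have hcmem : c ∈ Set.Ici (0:ℝ) := hc
    have key : ∀ x : ℝ, c ≤ x → x ≤ d → f x ≤ (d - x)/(d - c) * f c + (x - c)/(d - c) * f d := by
      intro x hcx hxd
      have h1 : (0:ℝ) ≤ (d - x)/(d - c) := div_nonneg (by linarith) hdc.le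
      have h2 : (0:ℝ) ≤ (x - c)/(d - c) := div_nonneg (by linarith) hdc.le
      have h3 : (d - x)/(d - c) + (x - c)/(d - c) = 1 := by
        rw [← add_div]; field_simp; ring
      have hcomb := hconv.2 hcmem hdmem h1 h2 h3
      have hx : ((d - x)/(d - c)) • c + ((x - c)/(d - c)) • d = x := by
        simp only [smul_eq_mul]
        field_simp
        ring
      rw [hx] at hcomb
      simpa [hf, smul_eq_mul] using hcomb
    have ha := key a hca (by linarith)
    have hb := key b hcb (by linarith)
    have hcc : f a + f b ≤ ((d-a)/(d-c) + (d-b)/(d-c)) * f c + ((a-c)/(d-c)+(b-c)/(d-c)) * f d := by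
      ring_nf
      ring_nf at ha hb
      linarith
    have e1 : (d-a)/(d-c) + (d-b)/(d-c) = 1 := by
      rw [← add_div, div_eq_one_iff_eq hdc.ne']; linarith
    have e2 : (a-c)/(d-c) + (b-c)/(d-c) = 1 := by
      rw [← add_div, div_eq_one_iff_eq hdc.ne']; linarith
    rw [e1, e2] at hcc
    simpa [hf] using hcc

lemma termEq (x r s : ℝ) (hr : r ≠ 0) (hs : s ≠ 0) :
    x * log (x / (r * s)) = x * log x - x * log r - x * log s := by
  rcases eq_or_ne x 0 with h | h
  · simp [h]
  · rw [log_div h (mul_ne_zero hr hs), log_mul hr hs]; ring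

noncomputable def Gfun (α β t : ℝ) : ℝ :=
  t * log t + (α - t) * log (α - t) + (β - t) * log (β - t)
    + (1 - α - β + t) * log (1 - α - β + t)

lemma affConvex (c d b : ℝ) (h : ∀ t ∈ Set.Icc (0:ℝ) b, 0 ≤ c + d * t) :
    ConvexOn ℝ (Set.Icc 0 b) (fun t => (c + d * t) * log (c + d * t)) := by
  have heq : (fun t => (c + d * t) * log (c + d * t))
      = ((fun x => x * log x) ∘ (AffineMap.lineMap c (c + d) : ℝ →ᵃ[ℝ] ℝ)) := by
    funext t
    simp [AffineMap.lineMap_apply, smul_eq_mul]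
    ring_nf
  rw [heq]
  apply (Real.convexOn_mul_log.comp_affineMap _).subset _ (convex_Icc 0 b)
  intro t ht
  simp [AffineMap.lineMap_apply, smul_eq_mul]
  have := h t ht
  linarith

lemma GConvex (α β : ℝ) (hβα : β < α) (hα : α < 1/2) :
    ConvexOn ℝ (Set.Icc 0 β) (Gfun α β) := by
  have h1 := affConvex 0 1 β (by intro t ht; simpa using ht.1)
  have h2 := affConvex α (-1) β (by intro t ht; simp; nlinarith [ht.2])
  have h3 := affConvex β (-1) β (by intro t ht; simp; nlinarith [ht.2])
  have h4 := affConvex (1 - α - β) 1 β (by intro t ht; simp; nlinarith [ht.1])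
  have := ((h1.add h2).add h3).add h4
  convert this using 1
  case e'_10 => rfl
  funext t
  simp [Gfun]
  ring_nf

lemma mutInfoEq (α β : ℝ) (hβpos : 0 < β) (hβα : β < α) (hα : α < 1/2)
    (p : Fin 2 → Fin 2 → ℝ) (h : JointWithMarginals p α β) :
    mutInfo2 p = Gfun α β (p 0 0) + binEnt α + binEnt β := by
  obtain ⟨hnn, hsum, hX, hY⟩ := h
  have hαpos : 0 < α := hβpos.trans hβα
  have hβ1 : β < 1/2 := hβα.trans hα
  simp only [Fin.sum_univ_two] at hsum
  have h01 : p 0 1 = α - p 0 0 := by linarith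
  have h10 : p 1 0 = β - p 0 0 := by linarith
  have h11 : p 1 1 = 1 - α - β + p 0 0 := by linarith
  have hr1 : p 1 0 + p 1 1 = 1 - α := by linarith
  have hc1 : p 0 1 + p 1 1 = 1 - β := by linarith
  have hαne : α ≠ 0 := ne_of_gt hαpos
  have hβne : β ≠ 0 := ne_of_gt hβpos
  have h1αne : (1 - α) ≠ 0 := by intro h; linarith [h]
  have h1βne : (1 - β) ≠ 0 := by intro h; linarith [h]
  simp only [mutInfo2, Fin.sum_univ_two, hX, hY, hr1, hc1]
  rw [termEq _ _ _ hαne hβne, termEq _ _ _ hαne h1βne,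
      termEq _ _ _ h1αne hβne, termEq _ _ _ h1αne h1βne]
  rw [h01, h10, h11]
  simp only [Gfun, binEnt]
  ring

lemma Gend (α β : ℝ) (hβpos : 0 < β) (hβα : β < α) (hα : α < 1/2) :
    Gfun α β β + binEnt α + binEnt β = binEnt β - α * binEnt (β / α) := by
  have hαpos : 0 < α := hβpos.trans hβα
  have hαβ : (0:ℝ) < α - β := by linarith
  have hGβ : Gfun α β β = β * log β + (α - β) * log (α - β) + (1 - α) * log (1 - α) := by
    simp only [Gfun, sub_self, zero_mul, log_zero, mul_zero, add_zero, sub_add_cancel]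
    try rw [show (1:ℝ) - α - β + β = 1 - α by ring]
  rw [hGβ]
  have h1 : (1:ℝ) - β / α = (α - β) / α := by field_simp
  simp only [binEnt, h1, log_div (ne_of_gt hβpos) (ne_of_gt hαpos),
    log_div (ne_of_gt hαβ) (ne_of_gt hαpos)]
  field_simp
  ring

theorem max_mutual_info_beta_lt_alpha (α β : ℝ)
    (hβpos : 0 < β) (hβα : β < α) (hα : α < 1 / 2) :
    (∀ p : Fin 2 → Fin 2 → ℝ, JointWithMarginals p α β →
        mutInfo2 p ≤ binEnt β - α * binEnt (β / α)) ∧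
    (∃ p : Fin 2 → Fin 2 → ℝ, JointWithMarginals p α β ∧
        mutInfo2 p = binEnt β - α * binEnt (β / α)) := by
  have hαpos : 0 < α := hβpos.trans hβα
  have hend := Gend α β hβpos hβα hα
  have hG0 : Gfun α β 0 = α * log α + β * log β + (1 - α - β) * log (1 - α - β) := by
    simp [Gfun]
  have hGβ : Gfun α β β = β * log β + (α - β) * log (α - β) + (1 - α) * log (1 - α) := by
    simp only [Gfun, sub_self, zero_mul, log_zero, mul_zero, add_zero, sub_add_cancel]
    try rw [show (1:ℝ) - α - β + β = 1 - α by ring]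
  have hpair : α * log α + (1 - α - β) * log (1 - α - β)
      ≤ (α - β) * log (α - β) + (1 - α) * log (1 - α) := by
    apply pairIneq α (1 - α - β) (α - β) (1 - α) (by linarith) (by linarith) (by linarith)
      (by ring)
  have h0β : Gfun α β 0 ≤ Gfun α β β := by rw [hG0, hGβ]; linarith
  constructor
  · intro p hp
    rw [mutInfoEq α β hβpos hβα hα p hp]
    obtain ⟨hnn, hsum, hX, hY⟩ := hp
    have ht0 : 0 ≤ p 0 0 := hnn 0 0
    have htβ : p 0 0 ≤ β := by have := hnn 1 0; linarith
    have hmax := (GConvex α β hβα hα).le_on_segment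
      (Set.left_mem_Icc.mpr hβpos.le) (Set.right_mem_Icc.mpr hβpos.le)
      (by rw [segment_eq_Icc hβpos.le]; exact ⟨ht0, htβ⟩)
    have : Gfun α β (p 0 0) ≤ Gfun α β β := le_trans hmax (max_le h0β le_rfl)
    linarith
  · refine ⟨![![β, α - β], ![0, 1 - α]], ⟨?_, ?_, ?_, ?_⟩, ?_⟩
    · intro i j
      fin_cases i <;> fin_cases j <;> simp <;> try linarith
    · simp [Fin.sum_univ_two]; try ring
    · simp
    · simp
    · have hp : JointWithMarginals ![![β, α - β], ![0, 1 - α]] α β := by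
        refine ⟨?_, ?_, ?_, ?_⟩
        · intro i j
          fin_cases i <;> fin_cases j <;> simp <;> try linarith
        · simp [Fin.sum_univ_two]; try ring
        · simp
        · simp
      rw [mutInfoEq α β hβpos hβα hα _ hp]
      simpa using hend
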